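/- Let r ≥ 1 and let T_r(i,j) = r + 2 − i − j for i ∈ [r], j ∈ [r+1−i]. If nonnegative integers a_1,...,a_r and b_1,...,b_r satisfy a_i + b_j ≥ r + 1 − i − j for all i ∈ [r] and j ∈ [r+1−i] (i.e., all entries become at most 1 after the operations), then ∑_{i=1}^r a_i + ∑_{j=1}^r b_j ≥ N_r − ⌈r/2⌉, where N_r = binom(⌈r/2⌉+1, 2) + binom(⌊r/2⌋+1, 2). -/

import Mathlib

open Finset

/-- `F` is a configuration in the simple matrix `A` (columns of `A` form a finset):
there is an injection of rows such that the multiset `F` of columns is a sub-multiset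
of the restricted columns of `A`. -/
def ConfigIn {s k m : ℕ} (F : Multiset (Fin k → Fin s)) (A : Finset (Fin m → Fin s)) : Prop :=
  ∃ ρ : Fin k ↪ Fin m, F ≤ A.1.map (fun col => col ∘ ρ)

/-- The forbidden number: the maximum number of columns of an `m`-rowed simple
`s`-matrix avoiding `F` as a configuration. -/
noncomputable def forb (m s : ℕ) {k : ℕ} (F : Multiset (Fin k → Fin s)) : ℕ :=
  sSup {n : ℕ | ∃ A : Finset (Fin m → Fin s), ¬ ConfigIn F A ∧ A.card = n}

/-- The 2-rowed configuration with `a` columns (0,0), `b` columns (1,0),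
`c` columns (0,1) and `d` columns (1,1), viewed as a 3-matrix. -/
def Fabcd (a b c d : ℕ) : Multiset (Fin 2 → Fin 3) :=
  Multiset.replicate a ![0, 0] + Multiset.replicate b ![1, 0] +
  Multiset.replicate c ![0, 1] + Multiset.replicate d ![1, 1]

/-- `p` copies of `K₂`. -/
def pK2 (p : ℕ) : Multiset (Fin 2 → Fin 3) := Fabcd p p p p

/-- `p` copies of `I₂`. -/
def pI2 (p : ℕ) : Multiset (Fin 2 → Fin 3) := Fabcd 0 p p 0


lemma sum_lem (r : ℕ) : ∀ q : ℕ, 2*q ≤ r+1 →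
    (∑ i ∈ Finset.Icc 1 q, (r+1-2*i)) + q*q = q*r := by
  intro q
  induction q with
  | zero => simp
  | succ q ih =>
    intro hq
    rw [Finset.sum_Icc_succ_top (by omega : 1 ≤ q+1)]
    have h1 := ih (by omega)
    have h2 : (q+1)*(q+1) = q*q + 2*q + 1 := by ring
    have h3 : (q+1)*r = q*r + r := by ring
    omega

theorem ops_lower_bound (r : ℕ) (hr : 1 ≤ r) (a b : ℕ → ℕ)
    (h : ∀ i ∈ Finset.Icc 1 r, ∀ j ∈ Finset.Icc 1 (r + 1 - i),
      r + 1 ≤ a i + b j + i + j) :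
    Nat.choose ((r + 1) / 2 + 1) 2 + Nat.choose (r / 2 + 1) 2 - (r + 1) / 2
      ≤ ∑ i ∈ Finset.Icc 1 r, a i + ∑ j ∈ Finset.Icc 1 r, b j := by
  obtain ⟨q, hq⟩ : ∃ q, (r+1)/2 = q := ⟨_, rfl⟩
  obtain ⟨p, hp⟩ : ∃ p, r/2 = p := ⟨_, rfl⟩
  rw [hq, hp]
  have hq2 : 2*q ≤ r+1 := by omega
  have hqr : q ≤ r := by omega
  have hdiag : ∀ i ∈ Finset.Icc 1 q, r+1-2*i ≤ a i + b i := by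
    intro i hi
    simp only [Finset.mem_Icc] at hi
    have := h i (by simp only [Finset.mem_Icc]; omega) i
      (by simp only [Finset.mem_Icc]; omega)
    omega
  have h1 : ∑ i ∈ Finset.Icc 1 q, (r+1-2*i) ≤ ∑ i ∈ Finset.Icc 1 q, (a i + b i) :=
    Finset.sum_le_sum hdiag
  have h2 : ∑ i ∈ Finset.Icc 1 q, (a i + b i)
      ≤ ∑ i ∈ Finset.Icc 1 r, a i + ∑ j ∈ Finset.Icc 1 r, b j := by
    rw [Finset.sum_add_distrib]
    gcongr <;> exact Finset.Icc_subset_Icc_right hqr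
  have hS := sum_lem r q hq2
  have hc1 : Nat.choose (q + 1) 2 = (q+1)*q/2 := by
    rw [Nat.choose_two_right]; simp
  have hc2 : Nat.choose (p + 1) 2 = (p+1)*p/2 := by
    rw [Nat.choose_two_right]; simp
  have hpq : p + q = r := by omega
  have hd1 : (2:ℕ) ∣ (q+1)*q := by
    rw [mul_comm]; exact (Nat.even_mul_succ_self q).two_dvd
  have hd2 : (2:ℕ) ∣ (p+1)*p := by
    rw [mul_comm]; exact (Nat.even_mul_succ_self p).two_dvd
  have he1 : (q+1)*q/2*2 = q*q + q := by rw [Nat.div_mul_cancel hd1]; ring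
  have he2 : (p+1)*p/2*2 = p*p + p := by rw [Nat.div_mul_cancel hd2]; ring
  rw [hc1, hc2, tsub_le_iff_right]
  rcases (by omega : q = p ∨ q = p + 1) with hcase | hcase
  · have hr3 : q*r = q*q + q*p := by rw [← hpq, hcase]; ring
    have hr4 : q*p = q*q := by rw [hcase]
    have hr5 : q*q = p*p := by rw [hcase]
    omega
  · have hr3 : q*r = q*q + q*p := by rw [← hpq]; ring
    have hr4 : q*q = p*p + 2*p + 1 := by rw [hcase]; ring
    have hr5 : q*p = p*p + p := by rw [hcase]; ring
    omega
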